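/- Let v₁, v₂, v₃, v₄ be the rows of the 4×4 matrix M(x,y,z) = [[−2, √μ₁₂, √μ₁₃, √μ₁₄], [√μ₁₂, −2, √μ₂₃·x, √μ₂₄/y], [√μ₁₃, √μ₂₃/x, −2, √μ₃₄·z], [√μ₁₄, √μ₂₄·y, √μ₃₄/z, −2]] with μᵢⱼ > 0 and x,y,z > 0, and let αᵢ = −eᵢ* be minus the i-th coordinate functional. For any ordered triple of distinct indices (i,j,k), define R_{(i,j,k)} = log( (αᵢ(v_j)·α_j(v_k)·α_k(v_i)) / (αᵢ(v_k)·α_k(v_j)·α_j(v_i)) ). Then R_{(2,3,4)} + R_{(1,4,3)} + R_{(1,2,4)} + R_{(1,3,2)} = 0. -/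

import Mathlib

open Real Set

/-- Rows of the mirror tetrahedron matrix: row `i` is the polar vector `vᵢ`. -/
noncomputable def tetraV (m12 m13 m14 m23 m24 m34 x y z : ℝ) :
    Matrix (Fin 4) (Fin 4) ℝ :=
  !![-2, Real.sqrt m12, Real.sqrt m13, Real.sqrt m14;
     Real.sqrt m12, -2, Real.sqrt m23 * x, Real.sqrt m24 / y;
     Real.sqrt m13, Real.sqrt m23 / x, -2, Real.sqrt m34 * z;
     Real.sqrt m14, Real.sqrt m24 * y, Real.sqrt m34 / z, -2]

/-- The invariant `R_{(i,j,k)}` where `αᵢ(v) = -(v i)`: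
`R = log((αᵢ(vⱼ)·αⱼ(v_k)·α_k(vᵢ)) / (αᵢ(v_k)·α_k(vⱼ)·αⱼ(vᵢ)))`. -/
noncomputable def tetraR (v : Matrix (Fin 4) (Fin 4) ℝ) (i j k : Fin 4) : ℝ :=
  Real.log (((-(v j i)) * (-(v k j)) * (-(v i k)))
    / ((-(v k i)) * (-(v j k)) * (-(v i j))))


theorem tetra_R_sum_zero
    (m12 m13 m14 m23 m24 m34 x y z : ℝ)
    (h12 : 0 < m12) (h13 : 0 < m13) (h14 : 0 < m14)
    (h23 : 0 < m23) (h24 : 0 < m24) (h34 : 0 < m34)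
    (hx : 0 < x) (hy : 0 < y) (hz : 0 < z) :
    tetraR (tetraV m12 m13 m14 m23 m24 m34 x y z) 1 2 3
      + tetraR (tetraV m12 m13 m14 m23 m24 m34 x y z) 0 3 2
      + tetraR (tetraV m12 m13 m14 m23 m24 m34 x y z) 0 1 3
      + tetraR (tetraV m12 m13 m14 m23 m24 m34 x y z) 0 2 1 = 0 := by
  simp only [tetraR, tetraV, Matrix.cons_val', Matrix.cons_val_zero, Matrix.cons_val_one,
    Matrix.head_cons, Matrix.empty_val', Matrix.cons_val_fin_one, Matrix.head_fin_const,
    Matrix.cons_val_two, Matrix.tail_cons, Matrix.cons_val_three, Matrix.of_apply, Fin.isValue]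
  simp only [mul_neg, neg_mul, neg_neg, neg_div_neg_eq]
  rw [← Real.log_mul (by positivity) (by positivity),
    ← Real.log_mul (by positivity) (by positivity),
    ← Real.log_mul (by positivity) (by positivity)]
  have h : ∀ a : ℝ, a = 1 → Real.log a = 0 := fun a ha => ha ▸ Real.log_one
  apply h
  have hs12 := (Real.sqrt_pos.mpr h12).ne'
  have hs13 := (Real.sqrt_pos.mpr h13).ne'
  have hs14 := (Real.sqrt_pos.mpr h14).ne'
  have hs23 := (Real.sqrt_pos.mpr h23).ne'
  have hs24 := (Real.sqrt_pos.mpr h24).ne'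
  have hs34 := (Real.sqrt_pos.mpr h34).ne'
  field_simp
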